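/- For every p = (x, y, z, s) ∈ Σ(f), the n−1 vectors u_1(z), …, u_{k+1}(z), v_1(z), …, v_k(z), w_1, …, w_m are linearly independent and their span equals the range of Df_p; in particular Df_p has rank n − 1 at every point of Σ(f). -/

import Mathlib

noncomputable section

open scoped RealInnerProductSpace

/-- Index type for the domain `ℝⁿ`, `n = 2k+2+m`: coordinates `x` (2k of them),
`y`, `z`, and `s` (m of them). -/
abbrev DomIx (k m : ℕ) := (Fin (2*k)) ⊕ Unit ⊕ Unit ⊕ (Fin m)

/-- The domain `ℝⁿ` with its Euclidean inner product. -/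
abbrev Dom (k m : ℕ) := EuclideanSpace ℝ (DomIx k m)

/-- Index type for the codomain `ℝ^{n+k}`: coordinates `X` (2k+1), `Y` (k), `Z`, `S` (m). -/
abbrev CodIx (k m : ℕ) := (Fin (2*k+1)) ⊕ (Fin k) ⊕ Unit ⊕ (Fin m)

/-- The codomain `ℝ^{n+k}` with its Euclidean inner product. -/
abbrev Cod (k m : ℕ) := EuclideanSpace ℝ (CodIx k m)

/-- The `x`-coordinates of a point (0-based: `px p j` is `x_{j+1}`). -/
def px {k m : ℕ} (p : Dom k m) (j : Fin (2*k)) : ℝ := p (Sum.inl j)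

/-- The `y`-coordinate of a point. -/
def py {k m : ℕ} (p : Dom k m) : ℝ := p (Sum.inr (Sum.inl ()))

/-- The `z`-coordinate of a point. -/
def pz {k m : ℕ} (p : Dom k m) : ℝ := p (Sum.inr (Sum.inr (Sum.inl ())))

/-- The `s`-coordinates of a point. -/
def ps {k m : ℕ} (p : Dom k m) (j : Fin m) : ℝ := p (Sum.inr (Sum.inr (Sum.inr j)))

/-- The (0-based) index of the coordinate `x_{2i-1}` (1-based), for `i : Fin k` (0-based). -/
def xo {k : ℕ} (i : Fin k) : Fin (2*k) := ⟨2*i.1, by have := i.isLt; omega⟩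

/-- The (0-based) index of the coordinate `x_{2i}` (1-based), for `i : Fin k` (0-based). -/
def xe {k : ℕ} (i : Fin k) : Fin (2*k) := ⟨2*i.1+1, by have := i.isLt; omega⟩

/-- The cusp normal form `f : ℝⁿ → ℝ^{n+k}`:
`X_i = x_i`, `X_{2k+1} = y`, `Y_i = z x_{2i-1} + z² x_{2i}`, `Z = z y + z³`, `S_j = s_j`. -/
def cuspF (k m : ℕ) (p : Dom k m) : Cod k m :=
  (EuclideanSpace.equiv (CodIx k m) ℝ).symm fun q =>
    match q with
    | Sum.inl j => if h : j.1 < 2*k then px p ⟨j.1, h⟩ else py p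
    | Sum.inr (Sum.inl i) => pz p * px p (xo i) + (pz p)^2 * px p (xe i)
    | Sum.inr (Sum.inr (Sum.inl _)) => pz p * py p + (pz p)^3
    | Sum.inr (Sum.inr (Sum.inr j)) => ps p j

/-- The singular set `Σ(f)` of the cusp normal form:
`x_{2i-1} + 2 z x_{2i} = 0` for all `i` and `y + 3z² = 0`. -/
def SingSet (k m : ℕ) : Set (Dom k m) :=
  {p | (∀ i : Fin k, px p (xo i) + 2 * pz p * px p (xe i) = 0) ∧ py p + 3 * (pz p)^2 = 0}

/-- The standard basis vector `e_z` of the domain. -/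
def ez (k m : ℕ) : Dom k m := EuclideanSpace.single (Sum.inr (Sum.inr (Sum.inl ()))) 1


/-- The standard basis vector `e_{X_j}` (0-based `j`) of the codomain. -/
def eX (k m : ℕ) (j : Fin (2*k+1)) : Cod k m := EuclideanSpace.single (Sum.inl j) 1

/-- The standard basis vector `e_{Y_i}` (0-based `i`) of the codomain. -/
def eY (k m : ℕ) (i : Fin k) : Cod k m := EuclideanSpace.single (Sum.inr (Sum.inl i)) 1

/-- The standard basis vector `e_Z` of the codomain. -/
def eZ (k m : ℕ) : Cod k m := EuclideanSpace.single (Sum.inr (Sum.inr (Sum.inl ()))) 1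

/-- The standard basis vector `e_{S_j}` of the codomain; this is `w_j`. -/
def eS (k m : ℕ) (j : Fin m) : Cod k m := EuclideanSpace.single (Sum.inr (Sum.inr (Sum.inr j))) 1

/-- `u_i(z) = e_{X_{2i-1}} + z • e_{Y_i}` for `1 ≤ i ≤ k` (here `i : Fin k`, 0-based). -/
def uVec (k m : ℕ) (i : Fin k) (z : ℝ) : Cod k m :=
  eX k m ⟨2*i.1, by have := i.isLt; omega⟩ + z • eY k m i

/-- `u_{k+1}(z) = e_{X_{2k+1}} + z • e_Z`. -/
def uLast (k m : ℕ) (z : ℝ) : Cod k m := eX k m ⟨2*k, by omega⟩ + z • eZ k m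

/-- `v_i(z) = e_{X_{2i}} + z² • e_{Y_i}` for `1 ≤ i ≤ k` (here `i : Fin k`, 0-based). -/
def vVec (k m : ℕ) (i : Fin k) (z : ℝ) : Cod k m :=
  eX k m ⟨2*i.1+1, by have := i.isLt; omega⟩ + z^2 • eY k m i

/-- The family `u_1(z), …, u_{k+1}(z), v_1(z), …, v_k(z), w_1, …, w_m`. -/
def famUVW (k m : ℕ) (z : ℝ) : (Fin (k+1) ⊕ Fin k ⊕ Fin m) → Cod k m :=
  fun q =>
    match q with
    | Sum.inl i => if h : i.1 < k then uVec k m ⟨i.1, h⟩ z else uLast k m z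
    | Sum.inr (Sum.inl i) => vVec k m i z
    | Sum.inr (Sum.inr j) => eS k m j

/-! ### Auxiliary definitions -/

namespace CuspAux

variable (k m : ℕ)

lemma proj_apply {ι : Type*} [Fintype ι] (i : ι) (v : EuclideanSpace ℝ ι) :
    EuclideanSpace.proj (𝕜 := ℝ) i v = v i := rfl

def yIx : DomIx k m := Sum.inr (Sum.inl ())
def zIx : DomIx k m := Sum.inr (Sum.inr (Sum.inl ()))

def mkC (g : CodIx k m → (Dom k m →L[ℝ] ℝ)) : Dom k m →L[ℝ] Cod k m :=
  (EuclideanSpace.equiv (CodIx k m) ℝ).symm.toContinuousLinearMap.comp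
    (ContinuousLinearMap.pi g)

lemma mkC_apply (g : CodIx k m → (Dom k m →L[ℝ] ℝ)) (v : Dom k m) (q : CodIx k m) :
    mkC k m g v q = g q v := by simp [mkC]

def Amap : Dom k m →L[ℝ] Cod k m := mkC k m fun q =>
  match q with
  | Sum.inl j => if h : j.1 < 2*k then EuclideanSpace.proj (Sum.inl (⟨j.1, h⟩ : Fin (2*k)))
      else EuclideanSpace.proj (yIx k m)
  | Sum.inr (Sum.inl _) => 0
  | Sum.inr (Sum.inr (Sum.inl _)) => 0
  | Sum.inr (Sum.inr (Sum.inr j)) => EuclideanSpace.proj (Sum.inr (Sum.inr (Sum.inr j)))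

def Bmap : Dom k m →L[ℝ] Cod k m := mkC k m fun q =>
  match q with
  | Sum.inl _ => 0
  | Sum.inr (Sum.inl i) => EuclideanSpace.proj (Sum.inl (xo i))
  | Sum.inr (Sum.inr (Sum.inl _)) => EuclideanSpace.proj (yIx k m)
  | Sum.inr (Sum.inr (Sum.inr _)) => 0

def Cmap : Dom k m →L[ℝ] Cod k m := mkC k m fun q =>
  match q with
  | Sum.inr (Sum.inl i) => EuclideanSpace.proj (Sum.inl (xe i))
  | _ => 0

lemma cuspF_eq : cuspF k m = fun p =>
    Amap k m p + pz p • Bmap k m p + (pz p * pz p) • Cmap k m p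
      + (pz p * pz p * pz p) • eZ k m := by
  funext p
  ext q
  have hsimp : ∀ q, cuspF k m p q =
      match q with
      | Sum.inl j => if h : j.1 < 2*k then px p ⟨j.1, h⟩ else py p
      | Sum.inr (Sum.inl i) => pz p * px p (xo i) + (pz p)^2 * px p (xe i)
      | Sum.inr (Sum.inr (Sum.inl _)) => pz p * py p + (pz p)^3
      | Sum.inr (Sum.inr (Sum.inr j)) => ps p j := fun q => rfl
  rcases q with j | i | u | j <;>
    simp only [hsimp, CuspAux.Amap, CuspAux.Bmap, CuspAux.Cmap, mkC_apply, eZ,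
      EuclideanSpace.single_apply, PiLp.add_apply, PiLp.smul_apply, smul_eq_mul,
      px, py, pz, ps, xo, xe, yIx, ContinuousLinearMap.zero_apply, Sum.inr.injEq, Sum.inl.injEq,
      CuspAux.proj_apply, reduceCtorEq, if_false, mul_zero, add_zero, zero_add]
  · split_ifs <;> simp_all [yIx]
  · ring
  · simp only [ite_true]; ring

def dzC : Dom k m →L[ℝ] ℝ := EuclideanSpace.proj (zIx k m)

def Lnice (p : Dom k m) : Dom k m →L[ℝ] Cod k m :=
  Amap k m + pz p • Bmap k m + (pz p * pz p) • Cmap k m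

lemma hasFDeriv (p : Dom k m) (hp : p ∈ SingSet k m) :
    HasFDerivAt (cuspF k m) (Lnice k m p) p := by
  have hz : HasFDerivAt (fun q : Dom k m => pz q) (dzC k m) p := (dzC k m).hasFDerivAt
  have hA := (Amap k m).hasFDerivAt (x := p)
  have hB := (Bmap k m).hasFDerivAt (x := p)
  have hC := (Cmap k m).hasFDerivAt (x := p)
  have h := ((hA.add (hz.smul hB)).add ((hz.mul hz).smul hC)).add
      (((hz.mul hz).mul hz).smul_const (eZ k m))
  rw [cuspF_eq k m]
  refine HasFDerivAt.congr_fderiv h (Eq.symm ?_)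
  have h1 : ∀ i : Fin k, p (Sum.inl (xo i)) + 2 * p (zIx k m) * p (Sum.inl (xe i)) = 0 := hp.1
  have h2 : p (yIx k m) + 3 * p (zIx k m) ^ 2 = 0 := hp.2
  simp only [xo, xe, zIx, yIx] at h1 h2
  refine ContinuousLinearMap.ext fun v => ?_
  ext q
  rcases q with j | i | u | j <;>
    simp only [Lnice, Amap, Bmap, Cmap, mkC_apply, dzC, eZ, CuspAux.proj_apply,
      ContinuousLinearMap.add_apply, ContinuousLinearMap.coe_smul', Pi.smul_apply,
      ContinuousLinearMap.smulRight_apply, PiLp.add_apply, PiLp.smul_apply, smul_eq_mul,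
      EuclideanSpace.single_apply, ContinuousLinearMap.zero_apply, Sum.inr.injEq,
      Sum.inl.injEq, reduceCtorEq, if_false, mul_zero, add_zero, zero_add, zero_mul,
      px, py, pz, ps, xo, xe, zIx, yIx, Pi.mul_apply]
  · linear_combination (-v (Sum.inr (Sum.inr (Sum.inl ())))) * h1 i
  · simp only [ite_true]
    linear_combination (-v (Sum.inr (Sum.inr (Sum.inl ())))) * h2

lemma Lnice_xo (p : Dom k m) (i : Fin k) :
    Lnice k m p (EuclideanSpace.single (Sum.inl (xo i)) 1) = uVec k m i (pz p) := by
  ext q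
  rcases q with j | i' | u | j <;>
    simp only [Lnice, Amap, Bmap, Cmap, mkC_apply, CuspAux.proj_apply,
      ContinuousLinearMap.add_apply, ContinuousLinearMap.coe_smul', Pi.smul_apply,
      PiLp.add_apply, PiLp.smul_apply, smul_eq_mul, uVec, eX, eY,
      EuclideanSpace.single_apply, ContinuousLinearMap.zero_apply, Sum.inr.injEq,
      Sum.inl.injEq, reduceCtorEq, if_false, mul_zero, add_zero, zero_add, zero_mul,
      xo, xe, zIx, yIx] <;>
  · split_ifs <;> simp_all [Fin.ext_iff] <;> omega

lemma Lnice_xe (p : Dom k m) (i : Fin k) :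
    Lnice k m p (EuclideanSpace.single (Sum.inl (xe i)) 1) = vVec k m i (pz p) := by
  ext q
  rcases q with j | i' | u | j <;>
    simp only [Lnice, Amap, Bmap, Cmap, mkC_apply, CuspAux.proj_apply,
      ContinuousLinearMap.add_apply, ContinuousLinearMap.coe_smul', Pi.smul_apply,
      PiLp.add_apply, PiLp.smul_apply, smul_eq_mul, vVec, eX, eY, pow_two,
      EuclideanSpace.single_apply, ContinuousLinearMap.zero_apply, Sum.inr.injEq,
      Sum.inl.injEq, reduceCtorEq, if_false, mul_zero, add_zero, zero_add, zero_mul,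
      xo, xe, zIx, yIx] <;>
  · split_ifs <;> simp_all [Fin.ext_iff] <;> omega

lemma Lnice_y (p : Dom k m) :
    Lnice k m p (EuclideanSpace.single (yIx k m) 1) = uLast k m (pz p) := by
  ext q
  rcases q with j | i' | u | j <;>
    simp only [Lnice, Amap, Bmap, Cmap, mkC_apply, CuspAux.proj_apply,
      ContinuousLinearMap.add_apply, ContinuousLinearMap.coe_smul', Pi.smul_apply,
      PiLp.add_apply, PiLp.smul_apply, smul_eq_mul, uLast, eX, eZ,
      EuclideanSpace.single_apply, ContinuousLinearMap.zero_apply, Sum.inr.injEq,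
      Sum.inl.injEq, reduceCtorEq, if_false, mul_zero, add_zero, zero_add, zero_mul,
      xo, xe, zIx, yIx] <;>
  · split_ifs <;> simp_all [Fin.ext_iff] <;> omega

lemma Lnice_z (p : Dom k m) :
    Lnice k m p (EuclideanSpace.single (zIx k m) 1) = 0 := by
  ext q
  rcases q with j | i' | u | j <;>
    simp only [Lnice, Amap, Bmap, Cmap, mkC_apply, CuspAux.proj_apply,
      ContinuousLinearMap.add_apply, ContinuousLinearMap.coe_smul', Pi.smul_apply,
      PiLp.add_apply, PiLp.smul_apply, smul_eq_mul, PiLp.zero_apply,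
      EuclideanSpace.single_apply, ContinuousLinearMap.zero_apply, Sum.inr.injEq,
      Sum.inl.injEq, reduceCtorEq, if_false, mul_zero, add_zero, zero_add, zero_mul,
      xo, xe, zIx, yIx] <;>
  · split_ifs <;> simp_all [Fin.ext_iff] <;> omega

lemma Lnice_s (p : Dom k m) (j : Fin m) :
    Lnice k m p (EuclideanSpace.single (Sum.inr (Sum.inr (Sum.inr j))) 1) = eS k m j := by
  ext q
  rcases q with j' | i' | u | j' <;>
    simp only [Lnice, Amap, Bmap, Cmap, mkC_apply, CuspAux.proj_apply,
      ContinuousLinearMap.add_apply, ContinuousLinearMap.coe_smul', Pi.smul_apply,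
      PiLp.add_apply, PiLp.smul_apply, smul_eq_mul, eS,
      EuclideanSpace.single_apply, ContinuousLinearMap.zero_apply, Sum.inr.injEq,
      Sum.inl.injEq, reduceCtorEq, if_false, mul_zero, add_zero, zero_add, zero_mul,
      xo, xe, zIx, yIx] <;>
  · split_ifs <;> simp_all [Fin.ext_iff] <;> omega

lemma fam_inl_lt (z : ℝ) (i : Fin k) :
    famUVW k m z (Sum.inl ⟨i.1, by omega⟩) = uVec k m i z := by
  simp only [famUVW]
  rw [dif_pos i.2]

lemma fam_inl_last (z : ℝ) :
    famUVW k m z (Sum.inl ⟨k, by omega⟩) = uLast k m z := by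
  simp only [famUVW]
  rw [dif_neg (by omega)]

def σf : (Fin (k+1) ⊕ Fin k ⊕ Fin m) → (Fin (2*k+1) ⊕ Fin m)
  | Sum.inl i => Sum.inl ⟨2*i.1, by have := i.isLt; omega⟩
  | Sum.inr (Sum.inl i) => Sum.inl ⟨2*i.1+1, by have := i.isLt; omega⟩
  | Sum.inr (Sum.inr j) => Sum.inr j

lemma σf_inj : Function.Injective (σf k m) := by
  rintro (a | a | a) (b | b | b) h <;>
    simp only [σf, Sum.inl.injEq, Sum.inr.injEq, Fin.mk.injEq, reduceCtorEq] at h <;>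
    simp_all [Fin.ext_iff] <;> omega

def piXS : Cod k m →ₗ[ℝ] ((Fin (2*k+1) ⊕ Fin m) → ℝ) :=
  LinearMap.pi fun t =>
    match t with
    | Sum.inl j => EuclideanSpace.projₗ (Sum.inl j)
    | Sum.inr j => EuclideanSpace.projₗ (Sum.inr (Sum.inr (Sum.inr j)))

lemma piXS_fam (z : ℝ) :
    piXS k m ∘ famUVW k m z = fun q => Pi.single (σf k m q) 1 := by
  funext q t
  rcases q with i | i | j
  · by_cases h : i.1 < k
    · rcases t with t | t <;>
        simp [piXS, famUVW, dif_pos h, σf, uVec, eX, eY,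
          EuclideanSpace.single_apply, Pi.single_apply, Fin.ext_iff]
    · have hik : i.1 = k := by omega
      rcases t with t | t <;>
        simp [piXS, famUVW, dif_neg h, σf, uLast, eX, eZ, hik,
          EuclideanSpace.single_apply, Pi.single_apply, Fin.ext_iff]
  · rcases t with t | t <;>
      simp [piXS, famUVW, σf, vVec, eX, eY,
        EuclideanSpace.single_apply, Pi.single_apply, Fin.ext_iff]
  · rcases t with t | t <;>
      simp [piXS, famUVW, σf, eS,
        EuclideanSpace.single_apply, Pi.single_apply, Fin.ext_iff]

lemma fam_indep (z : ℝ) : LinearIndependent ℝ (famUVW k m z) := by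
  have h0 : LinearIndependent ℝ
      (fun t : Fin (2*k+1) ⊕ Fin m => (Pi.single t 1 : (Fin (2*k+1) ⊕ Fin m) → ℝ)) := by
    have h := (Pi.basisFun ℝ (Fin (2*k+1) ⊕ Fin m)).linearIndependent
    have he : ⇑(Pi.basisFun ℝ (Fin (2*k+1) ⊕ Fin m)) =
        fun t => (Pi.single t 1 : (Fin (2*k+1) ⊕ Fin m) → ℝ) :=
      funext fun t => by rw [Pi.basisFun_apply]
    rwa [he] at h
  have h1 := h0.comp (σf k m) (σf_inj k m)
  have h2 : piXS k m ∘ famUVW k m z =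
      fun q => (Pi.single (σf k m q) 1 : (Fin (2*k+1) ⊕ Fin m) → ℝ) := piXS_fam k m z
  exact LinearIndependent.of_comp (piXS k m) (h2 ▸ h1)

end CuspAux

/-- at every point `p ∈ Σ(f)` the `n-1` vectors
`u_1(z), …, u_{k+1}(z), v_1(z), …, v_k(z), w_1, …, w_m` (with `z` the `z`-coordinate of `p`)
are linearly independent and span the range of `Df_p`; in particular `Df_p` has rank
`n - 1 = 2k+1+m`. -/
theorem statement1 (k m : ℕ) (hk : 1 ≤ k) (p : Dom k m) (hp : p ∈ SingSet k m) :
    LinearIndependent ℝ (famUVW k m (pz p)) ∧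
    Submodule.span ℝ (Set.range (famUVW k m (pz p)))
      = LinearMap.range (fderiv ℝ (cuspF k m) p : Dom k m →ₗ[ℝ] Cod k m) ∧
    Module.finrank ℝ (LinearMap.range (fderiv ℝ (cuspF k m) p : Dom k m →ₗ[ℝ] Cod k m)) = 2*k+1+m := by
  have hfd := CuspAux.hasFDeriv k m p hp
  have hDf : fderiv ℝ (cuspF k m) p = CuspAux.Lnice k m p := hfd.fderiv
  have hindep : LinearIndependent ℝ (famUVW k m (pz p)) := CuspAux.fam_indep k m (pz p)
  have hspan : Submodule.span ℝ (Set.range (famUVW k m (pz p)))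
      = LinearMap.range (fderiv ℝ (cuspF k m) p : Dom k m →ₗ[ℝ] Cod k m) := by
    rw [hDf]
    have hbr : LinearMap.range (CuspAux.Lnice k m p : Dom k m →ₗ[ℝ] Cod k m) = Submodule.span ℝ
        (Set.range fun ix : DomIx k m =>
          CuspAux.Lnice k m p (EuclideanSpace.single ix 1)) := by
      conv_lhs => rw [LinearMap.range_eq_map,
        ← (EuclideanSpace.basisFun (DomIx k m) ℝ).toBasis.span_eq,
        Submodule.map_span, ← Set.range_comp]
      exact congrArg (Submodule.span ℝ) (congrArg Set.range (funext fun ix => by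
        simp [Function.comp, OrthonormalBasis.coe_toBasis, EuclideanSpace.basisFun_apply]))
    rw [hbr]
    apply le_antisymm
    · rw [Submodule.span_le]
      rintro _ ⟨q, rfl⟩
      rcases q with i | i | j
      · by_cases h : i.1 < k
        · have : famUVW k m (pz p) (Sum.inl i) = uVec k m ⟨i.1, h⟩ (pz p) := by
            simp only [famUVW]; rw [dif_pos h]
          rw [this, ← CuspAux.Lnice_xo k m p ⟨i.1, h⟩]
          exact Submodule.subset_span ⟨Sum.inl (xo ⟨i.1, h⟩), rfl⟩
        · have : famUVW k m (pz p) (Sum.inl i) = uLast k m (pz p) := by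
            simp only [famUVW]; rw [dif_neg h]
          rw [this, ← CuspAux.Lnice_y k m p]
          exact Submodule.subset_span ⟨CuspAux.yIx k m, rfl⟩
      · have : famUVW k m (pz p) (Sum.inr (Sum.inl i)) = vVec k m i (pz p) := rfl
        rw [this, ← CuspAux.Lnice_xe k m p i]
        exact Submodule.subset_span ⟨Sum.inl (xe i), rfl⟩
      · have : famUVW k m (pz p) (Sum.inr (Sum.inr j)) = eS k m j := rfl
        rw [this, ← CuspAux.Lnice_s k m p j]
        exact Submodule.subset_span ⟨Sum.inr (Sum.inr (Sum.inr j)), rfl⟩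
    · rw [Submodule.span_le]
      rintro _ ⟨ix, rfl⟩
      beta_reduce
      rcases ix with j | u | u | j
      · set i0 : Fin k := ⟨j.1 / 2, by have := j.isLt; omega⟩ with hi0
        by_cases hpar : j.1 % 2 = 0
        · have hj : j = xo i0 := Fin.ext (by simp only [xo, hi0]; omega)
          rw [hj, CuspAux.Lnice_xo k m p i0, ← CuspAux.fam_inl_lt k m (pz p) i0]
          exact Submodule.subset_span ⟨_, rfl⟩
        · have hj : j = xe i0 := Fin.ext (by simp only [xe, hi0]; omega)
          rw [hj, CuspAux.Lnice_xe k m p i0]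
          exact Submodule.subset_span ⟨Sum.inr (Sum.inl i0), rfl⟩
      · have : (Sum.inr (Sum.inl u) : DomIx k m) = CuspAux.yIx k m := rfl
        rw [this, CuspAux.Lnice_y k m p, ← CuspAux.fam_inl_last k m (pz p)]
        exact Submodule.subset_span ⟨_, rfl⟩
      · have : (Sum.inr (Sum.inr (Sum.inl u)) : DomIx k m) = CuspAux.zIx k m := rfl
        rw [this, CuspAux.Lnice_z k m p]
        exact Submodule.zero_mem _
      · rw [CuspAux.Lnice_s k m p j]
        exact Submodule.subset_span ⟨Sum.inr (Sum.inr j), rfl⟩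
  refine ⟨hindep, hspan, ?_⟩
  rw [← hspan, finrank_span_eq_card hindep]
  simp only [Fintype.card_sum, Fintype.card_fin]
  omega
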